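/- Let 𝓛 be a summable category, i.e. a category with zero morphisms equipped with a summability structure (S, π₀, π₁, σ). Let ι₀ = ⟨id_X, 0⟩ ∈ 𝓛(X, S X) and let τ_X ∈ 𝓛(S²X, S X) be the natural morphism with π₀∘τ = π₀∘π₀ and π₁∘τ = π₀∘π₁ + π₁∘π₀. Then the triple (S, ι₀, τ) is a monad on 𝓛: ι₀ and τ are natural, τ∘ι₀_{S X} = id_{S X} = τ∘S(ι₀), and τ∘S(τ_X) = τ∘τ_{S X}. -/

import Mathlib

open CategoryTheory Limits

universe v u

/-- A pre-summability structure on a category with zero morphisms: a functor `S`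
together with jointly monic natural transformations `π₀, π₁ : S ⟶ 𝟭 C` and a
natural transformation `σ : S ⟶ 𝟭 C`. -/
structure PreSummability (C : Type u) [Category.{v} C] [HasZeroMorphisms C] where
  S : C ⥤ C
  π0 : S ⟶ 𝟭 C
  π1 : S ⟶ 𝟭 C
  σ : S ⟶ 𝟭 C
  jointly_monic : ∀ {Y X : C} (f g : Y ⟶ S.obj X),
    f ≫ π0.app X = g ≫ π0.app X → f ≫ π1.app X = g ≫ π1.app X → f = g

namespace PreSummability

variable {C : Type u} [Category.{v} C] [HasZeroMorphisms C] (P : PreSummability C)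

/-- Two morphisms are summable when they admit a (necessarily unique) witness. -/
def Summable {Y X : C} (f₀ f₁ : Y ⟶ X) : Prop :=
  ∃ h : Y ⟶ P.S.obj X, h ≫ P.π0.app X = f₀ ∧ h ≫ P.π1.app X = f₁

/-- The witness `⟨f₀, f₁⟩` of a summable pair (an arbitrary value if the pair is
not summable). -/
noncomputable def witness {Y X : C} (f₀ f₁ : Y ⟶ X) : Y ⟶ P.S.obj X :=
  @dite _ (P.Summable f₀ f₁) (Classical.propDecidable _) (fun h => h.choose) (fun _ => 0)

/-- The sum `f₀ + f₁ = σ ∘ ⟨f₀, f₁⟩` of a summable pair. -/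
noncomputable def sum {Y X : C} (f₀ f₁ : Y ⟶ X) : Y ⟶ X :=
  P.witness f₀ f₁ ≫ P.σ.app X

/-- Projections indexed by a boolean. -/
def pr (i : Bool) : P.S ⟶ 𝟭 C := if i then P.π1 else P.π0

/-- Axiom (S-com): `π₁` and `π₀` are summable with `π₁ + π₀ = σ`. -/
def SCom : Prop := ∀ X : C,
  P.Summable (P.π1.app X) (P.π0.app X) ∧ P.sum (P.π1.app X) (P.π0.app X) = P.σ.app X

/-- Axiom (S-zero): `0` and `id` are summable with `0 + id = id`. -/
def SZero : Prop := ∀ X : C,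
  P.Summable (0 : X ⟶ X) (𝟙 X) ∧ P.sum (0 : X ⟶ X) (𝟙 X) = 𝟙 X

/-- Axiom (S-wit): if `σ∘f₀` and `σ∘f₁` are summable then `f₀` and `f₁` are summable. -/
def SWit : Prop := ∀ (X Y : C) (f₀ f₁ : X ⟶ P.S.obj Y),
  P.Summable (f₀ ≫ P.σ.app Y) (f₁ ≫ P.σ.app Y) → P.Summable f₀ f₁

end PreSummability

namespace PreSummability

variable {C : Type u} [Category.{v} C] [HasZeroMorphisms C]

/-- The unit `ι₀ = ⟨id, 0⟩ : X ⟶ S X`. -/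
noncomputable def iota0 (P : PreSummability C) (X : C) : X ⟶ P.S.obj X :=
  P.witness (𝟙 X) 0

end PreSummability

namespace PreSummability

variable {C : Type u} [Category.{v} C] [HasZeroMorphisms C] (P : PreSummability C)

lemma witness_spec {Y X : C} {f g : Y ⟶ X} (h : P.Summable f g) :
    P.witness f g ≫ P.π0.app X = f ∧ P.witness f g ≫ P.π1.app X = g := by
  rw [witness, dif_pos h]
  exact h.choose_spec

lemma witness_eq {Y X : C} {f g : Y ⟶ X} (h : Y ⟶ P.S.obj X)
    (h0 : h ≫ P.π0.app X = f) (h1 : h ≫ P.π1.app X = g) :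
    P.witness f g = h := by
  obtain ⟨w0, w1⟩ := P.witness_spec ⟨h, h0, h1⟩
  exact P.jointly_monic _ _ (by rw [w0, h0]) (by rw [w1, h1])

lemma sum_eq {Y X : C} {f g : Y ⟶ X} (h : Y ⟶ P.S.obj X)
    (h0 : h ≫ P.π0.app X = f) (h1 : h ≫ P.π1.app X = g) :
    P.sum f g = h ≫ P.σ.app X := by
  rw [sum, P.witness_eq h h0 h1]

lemma natπ0 {X Y : C} (f : X ⟶ Y) : P.S.map f ≫ P.π0.app Y = P.π0.app X ≫ f := by
  simpa using P.π0.naturality f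

lemma natπ1 {X Y : C} (f : X ⟶ Y) : P.S.map f ≫ P.π1.app Y = P.π1.app X ≫ f := by
  simpa using P.π1.naturality f

lemma natσ {X Y : C} (f : X ⟶ Y) : P.S.map f ≫ P.σ.app Y = P.σ.app X ≫ f := by
  simpa using P.σ.naturality f

lemma summable_precomp {Z Y X : C} {f g : Y ⟶ X} (e : Z ⟶ Y) (h : P.Summable f g) :
    P.Summable (e ≫ f) (e ≫ g) := by
  obtain ⟨w0, w1⟩ := P.witness_spec h
  exact ⟨e ≫ P.witness f g, by rw [Category.assoc, w0], by rw [Category.assoc, w1]⟩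

lemma sum_precomp {Z Y X : C} {f g : Y ⟶ X} (e : Z ⟶ Y) (h : P.Summable f g) :
    e ≫ P.sum f g = P.sum (e ≫ f) (e ≫ g) := by
  obtain ⟨w0, w1⟩ := P.witness_spec h
  rw [P.sum_eq (e ≫ P.witness f g) (by rw [Category.assoc, w0]) (by rw [Category.assoc, w1]),
    sum, Category.assoc]

lemma summable_postcomp {Y X X' : C} {f g : Y ⟶ X} (k : X ⟶ X') (h : P.Summable f g) :
    P.Summable (f ≫ k) (g ≫ k) := by
  obtain ⟨w0, w1⟩ := P.witness_spec h
  refine ⟨P.witness f g ≫ P.S.map k, ?_, ?_⟩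
  · rw [Category.assoc, P.natπ0 k, ← Category.assoc, w0]
  · rw [Category.assoc, P.natπ1 k, ← Category.assoc, w1]

lemma sum_postcomp {Y X X' : C} {f g : Y ⟶ X} (k : X ⟶ X') (h : P.Summable f g) :
    P.sum f g ≫ k = P.sum (f ≫ k) (g ≫ k) := by
  obtain ⟨w0, w1⟩ := P.witness_spec h
  rw [P.sum_eq (P.witness f g ≫ P.S.map k)
      (by rw [Category.assoc, P.natπ0 k, ← Category.assoc, w0])
      (by rw [Category.assoc, P.natπ1 k, ← Category.assoc, w1]),
    sum, Category.assoc, Category.assoc, P.natσ k, ← Category.assoc]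

end PreSummability
namespace PreSummability

variable {C : Type u} [Category.{v} C] [HasZeroMorphisms C] (P : PreSummability C)

section Axioms

variable (hcom : P.SCom) (hzero : P.SZero)
include hcom

lemma swap_σ (X : C) :
    P.witness (P.π1.app X) (P.π0.app X) ≫ P.σ.app X = P.σ.app X := (hcom X).2

lemma summable_symm {Y X : C} {f g : Y ⟶ X} (h : P.Summable f g) : P.Summable g f := by
  obtain ⟨w0, w1⟩ := P.witness_spec h
  obtain ⟨c0, c1⟩ := P.witness_spec (hcom X).1
  simp only [Functor.id_obj] at c0 c1
  exact ⟨P.witness f g ≫ P.witness (P.π1.app X) (P.π0.app X),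
    by simp only [Functor.id_obj]; rw [Category.assoc, c0, w1],
    by simp only [Functor.id_obj]; rw [Category.assoc, c1, w0]⟩

lemma sum_comm {Y X : C} {f g : Y ⟶ X} (h : P.Summable f g) : P.sum g f = P.sum f g := by
  obtain ⟨w0, w1⟩ := P.witness_spec h
  obtain ⟨c0, c1⟩ := P.witness_spec (hcom X).1
  simp only [Functor.id_obj] at c0 c1
  rw [P.sum_eq (P.witness f g ≫ P.witness (P.π1.app X) (P.π0.app X))
      (by simp only [Functor.id_obj]; rw [Category.assoc, c0, w1])
      (by simp only [Functor.id_obj]; rw [Category.assoc, c1, w0])]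
  simp only [Functor.id_obj]
  rw [Category.assoc, P.swap_σ hcom]
  rfl

include hzero

lemma summable_id_zero (X : C) : P.Summable (𝟙 X) (0 : X ⟶ X) :=
  P.summable_symm hcom (hzero X).1

lemma iota0_π0 (X : C) : iota0 P X ≫ P.π0.app X = 𝟙 X :=
  (P.witness_spec (P.summable_id_zero hcom hzero X)).1

lemma iota0_π1 (X : C) : iota0 P X ≫ P.π1.app X = 0 :=
  (P.witness_spec (P.summable_id_zero hcom hzero X)).2

lemma iota0_σ (X : C) : iota0 P X ≫ P.σ.app X = 𝟙 X := by
  have h : P.sum (𝟙 X) (0 : X ⟶ X) = 𝟙 X := by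
    rw [← P.sum_comm hcom (P.summable_id_zero hcom hzero X)]
    exact (hzero X).2
  exact h

omit hcom

lemma iota1_π0 (X : C) : P.witness (0 : X ⟶ X) (𝟙 X) ≫ P.π0.app X = 0 :=
  (P.witness_spec (hzero X).1).1

lemma iota1_π1 (X : C) : P.witness (0 : X ⟶ X) (𝟙 X) ≫ P.π1.app X = 𝟙 X :=
  (P.witness_spec (hzero X).1).2

lemma iota1_σ (X : C) : P.witness (0 : X ⟶ X) (𝟙 X) ≫ P.σ.app X = 𝟙 X := (hzero X).2

lemma summable_zero_left {Y X : C} (f : Y ⟶ X) : P.Summable 0 f :=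
  ⟨f ≫ P.witness (0 : X ⟶ X) (𝟙 X),
    by rw [Category.assoc, P.iota1_π0 hzero, comp_zero],
    by rw [Category.assoc, P.iota1_π1 hzero, Category.comp_id]⟩

lemma sum_zero_left {Y X : C} (f : Y ⟶ X) : P.sum 0 f = f := by
  rw [P.sum_eq (f ≫ P.witness (0 : X ⟶ X) (𝟙 X))
      (by rw [Category.assoc, P.iota1_π0 hzero, comp_zero])
      (by rw [Category.assoc, P.iota1_π1 hzero, Category.comp_id]),
    Category.assoc, P.iota1_σ hzero, Category.comp_id]

include hcom

lemma summable_zero_right {Y X : C} (f : Y ⟶ X) : P.Summable f 0 :=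
  ⟨f ≫ iota0 P X,
    by rw [Category.assoc, P.iota0_π0 hcom hzero, Category.comp_id],
    by rw [Category.assoc, P.iota0_π1 hcom hzero, comp_zero]⟩

lemma sum_zero_right {Y X : C} (f : Y ⟶ X) : P.sum f 0 = f := by
  rw [P.sum_eq (f ≫ iota0 P X)
      (by rw [Category.assoc, P.iota0_π0 hcom hzero, Category.comp_id])
      (by rw [Category.assoc, P.iota0_π1 hcom hzero, comp_zero]),
    Category.assoc, P.iota0_σ hcom hzero, Category.comp_id]

end Axioms

end PreSummability
namespace PreSummability

variable {C : Type u} [Category.{v} C] [HasZeroMorphisms C] (P : PreSummability C)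

section Axioms2

variable (hcom : P.SCom) (hzero : P.SZero) (hwit : P.SWit)
include hcom hzero hwit

/-- `π₁π₀` and `π₀π₁` are summable. -/
lemma pairS (X : C) :
    P.Summable (P.π1.app (P.S.obj X) ≫ P.π0.app X) (P.π0.app (P.S.obj X) ≫ P.π1.app X) := by
  obtain ⟨c0, c1⟩ := P.witness_spec (hcom X).1
  simp only [Functor.id_obj] at c0 c1
  have sσ : P.Summable (P.π0.app (P.S.obj X) ≫ P.σ.app X) (P.π1.app (P.S.obj X) ≫ P.σ.app X) :=
    ⟨P.S.map (P.σ.app X), by simpa using P.natπ0 (P.σ.app X),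
      by simpa using P.natπ1 (P.σ.app X)⟩
  have sσ' := P.summable_symm hcom sσ
  have hc : (P.π0.app (P.S.obj X) ≫ P.witness (P.π1.app X) (P.π0.app X)) ≫ P.σ.app X
      = P.π0.app (P.S.obj X) ≫ P.σ.app X := by
    rw [Category.assoc, P.swap_σ hcom]
  obtain ⟨h, h0, h1⟩ := hwit _ _ (P.π1.app (P.S.obj X))
    (P.π0.app (P.S.obj X) ≫ P.witness (P.π1.app X) (P.π0.app X)) (by rw [hc]; exact sσ')
  simp only [Functor.id_obj] at h0 h1
  refine ⟨h ≫ P.S.map (P.π0.app X), ?_, ?_⟩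
  · rw [Category.assoc, P.natπ0 (P.π0.app X), ← Category.assoc, h0]
  · rw [Category.assoc, P.natπ1 (P.π0.app X), ← Category.assoc, h1, Category.assoc, c0]

/-- The exchange law `(a+b)+c = (c+a)+b`. -/
lemma exchange {Z X : C} {a b c : Z ⟶ X}
    (sab : P.Summable a b) (s2 : P.Summable (P.sum a b) c) :
    P.sum (P.sum a b) c = P.sum (P.sum c a) b := by
  obtain ⟨w0, w1⟩ := P.witness_spec sab
  have hι0 := P.iota0_π0 hcom hzero X
  have hι1 := P.iota0_π1 hcom hzero X
  have hισ := P.iota0_σ hcom hzero X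
  -- obtain the double witness h
  obtain ⟨h, h0, h1⟩ := hwit _ _ (P.witness a b) (c ≫ iota0 P X)
    (by rw [Category.assoc, hισ, Category.comp_id]; exact s2)
  simp only [Functor.id_obj] at h0 h1
  -- left association: sum (sum a b) c = h ≫ σ(SX) ≫ σ X
  have e1 : P.sum (P.sum a b) c = (h ≫ P.σ.app (P.S.obj X)) ≫ P.σ.app X := by
    rw [P.sum_eq (h ≫ P.S.map (P.σ.app X))
        (by rw [Category.assoc, P.natπ0 (P.σ.app X), ← Category.assoc, h0]; rfl)
        (by rw [Category.assoc, P.natπ1 (P.σ.app X), ← Category.assoc, h1,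
              Category.assoc, hισ, Category.comp_id]),
      Category.assoc, P.natσ (P.σ.app X), ← Category.assoc]
  -- n := h ≫ σ(SX) equals the sum of the two rows
  have scw : P.Summable (c ≫ iota0 P X) (P.witness a b) := by
    have := P.summable_precomp h (hcom (P.S.obj X)).1
    rwa [h0, h1] at this
  have e2 : h ≫ P.σ.app (P.S.obj X) = P.sum (c ≫ iota0 P X) (P.witness a b) := by
    rw [← (hcom (P.S.obj X)).2, P.sum_precomp h (hcom (P.S.obj X)).1, h0, h1]
  -- projections of n
  have n0 : (h ≫ P.σ.app (P.S.obj X)) ≫ P.π0.app X = P.sum c a := by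
    rw [e2, P.sum_postcomp (P.π0.app X) scw, Category.assoc, hι0, Category.comp_id, w0]
  have n1 : (h ≫ P.σ.app (P.S.obj X)) ≫ P.π1.app X = b := by
    rw [e2, P.sum_postcomp (P.π1.app X) scw, Category.assoc, hι1, comp_zero, w1,
      P.sum_zero_left hzero]
  rw [e1, P.sum_eq (h ≫ P.σ.app (P.S.obj X)) n0 n1]

end Axioms2

end PreSummability
open PreSummability

theorem stmt13 {C : Type u} [Category.{v} C] [HasZeroMorphisms C]
    (P : PreSummability C) (hcom : P.SCom) (hzero : P.SZero) (hwit : P.SWit)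
    (τ : ∀ X : C, P.S.obj (P.S.obj X) ⟶ P.S.obj X)
    (hτ0 : ∀ X : C, τ X ≫ P.π0.app X = P.π0.app (P.S.obj X) ≫ P.π0.app X)
    (hτ1 : ∀ X : C, τ X ≫ P.π1.app X =
      P.sum (P.π1.app (P.S.obj X) ≫ P.π0.app X) (P.π0.app (P.S.obj X) ≫ P.π1.app X)) :
    -- `ι₀` is natural
    (∀ {X Y : C} (f : X ⟶ Y), f ≫ iota0 P Y = iota0 P X ≫ P.S.map f) ∧
    -- `τ` is natural
    (∀ {X Y : C} (f : X ⟶ Y), P.S.map (P.S.map f) ≫ τ Y = τ X ≫ P.S.map f) ∧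
    -- unit laws
    (∀ X : C, iota0 P (P.S.obj X) ≫ τ X = 𝟙 (P.S.obj X)) ∧
    (∀ X : C, P.S.map (iota0 P X) ≫ τ X = 𝟙 (P.S.obj X)) ∧
    -- associativity
    (∀ X : C, P.S.map (τ X) ≫ τ X = τ (P.S.obj X) ≫ τ X) := by
  refine ⟨?_, ?_, ?_, ?_, ?_⟩
  · -- ι₀ natural
    intro X Y f
    refine P.jointly_monic _ _ ?_ ?_
    · rw [Category.assoc, P.iota0_π0 hcom hzero, Category.comp_id, Category.assoc,
        P.natπ0 f, ← Category.assoc, P.iota0_π0 hcom hzero, Category.id_comp]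
    · rw [Category.assoc, P.iota0_π1 hcom hzero, comp_zero, Category.assoc,
        P.natπ1 f, ← Category.assoc, P.iota0_π1 hcom hzero, zero_comp]
  · -- τ natural
    intro X Y f
    refine P.jointly_monic _ _ ?_ ?_
    · simp only [Category.assoc]
      rw [hτ0 Y, ← Category.assoc, P.natπ0 (P.S.map f), Category.assoc, P.natπ0 f]
      conv_rhs => rw [← Category.assoc, hτ0 X, Category.assoc]
    · simp only [Category.assoc]
      have e1 : P.S.map (P.S.map f) ≫ P.π1.app (P.S.obj Y) ≫ P.π0.app Y
          = (P.π1.app (P.S.obj X) ≫ P.π0.app X) ≫ f := by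
        rw [← Category.assoc, P.natπ1 (P.S.map f), Category.assoc, P.natπ0 f,
          ← Category.assoc]
      have e2 : P.S.map (P.S.map f) ≫ P.π0.app (P.S.obj Y) ≫ P.π1.app Y
          = (P.π0.app (P.S.obj X) ≫ P.π1.app X) ≫ f := by
        rw [← Category.assoc, P.natπ0 (P.S.map f), Category.assoc, P.natπ1 f,
          ← Category.assoc]
      calc P.S.map (P.S.map f) ≫ τ Y ≫ P.π1.app Y
          = P.S.map (P.S.map f) ≫ P.sum (P.π1.app (P.S.obj Y) ≫ P.π0.app Y)
              (P.π0.app (P.S.obj Y) ≫ P.π1.app Y) := by rw [hτ1 Y]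
        _ = P.sum (P.S.map (P.S.map f) ≫ P.π1.app (P.S.obj Y) ≫ P.π0.app Y)
              (P.S.map (P.S.map f) ≫ P.π0.app (P.S.obj Y) ≫ P.π1.app Y) :=
            P.sum_precomp _ (P.pairS hcom hzero hwit Y)
        _ = P.sum ((P.π1.app (P.S.obj X) ≫ P.π0.app X) ≫ f)
              ((P.π0.app (P.S.obj X) ≫ P.π1.app X) ≫ f) := by rw [e1, e2]
        _ = P.sum (P.π1.app (P.S.obj X) ≫ P.π0.app X)
              (P.π0.app (P.S.obj X) ≫ P.π1.app X) ≫ f :=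
            (P.sum_postcomp f (P.pairS hcom hzero hwit X)).symm
        _ = (τ X ≫ P.π1.app X) ≫ f := by rw [hτ1 X]
        _ = τ X ≫ P.S.map f ≫ P.π1.app Y := by
            rw [Category.assoc, ← P.natπ1 f]
  · -- left unit
    intro X
    refine P.jointly_monic _ _ ?_ ?_
    · rw [Category.assoc, hτ0 X, ← Category.assoc,
        P.iota0_π0 hcom hzero, Category.id_comp]
    · rw [Category.assoc, hτ1 X, Category.id_comp,
        P.sum_precomp _ (P.pairS hcom hzero hwit X), ← Category.assoc,
        P.iota0_π1 hcom hzero, zero_comp, ← Category.assoc,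
        P.iota0_π0 hcom hzero, Category.id_comp, P.sum_zero_left hzero]
  · -- right unit
    intro X
    have u1 : P.S.map (iota0 P X) ≫ P.π0.app (P.S.obj X) = P.π0.app X ≫ iota0 P X :=
      P.natπ0 (iota0 P X)
    have v1 : P.S.map (iota0 P X) ≫ P.π1.app (P.S.obj X) = P.π1.app X ≫ iota0 P X :=
      P.natπ1 (iota0 P X)
    refine P.jointly_monic _ _ ?_ ?_
    · rw [Category.assoc, hτ0 X, ← Category.assoc, u1, Category.assoc]
      simp only [Functor.id_obj]
      rw [P.iota0_π0 hcom hzero, Category.comp_id, Category.id_comp]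
    · rw [Category.assoc, hτ1 X, Category.id_comp,
        P.sum_precomp _ (P.pairS hcom hzero hwit X), ← Category.assoc,
        v1, Category.assoc]
      simp only [Functor.id_obj]
      rw [P.iota0_π0 hcom hzero, Category.comp_id, ← Category.assoc, u1, Category.assoc]
      simp only [Functor.id_obj]
      rw [P.iota0_π1 hcom hzero, comp_zero, P.sum_zero_right hcom hzero]
  · -- associativity
    intro X
    refine P.jointly_monic _ _ ?_ ?_
    · simp only [Category.assoc]
      rw [hτ0 X, ← Category.assoc, P.natπ0 (τ X), Category.assoc, hτ0 X]
      conv_rhs => rw [← Category.assoc, hτ0 (P.S.obj X), Category.assoc]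
    · simp only [Category.assoc]
      set X2 := P.S.obj X with hX2
      set X3 := P.S.obj X2 with hX3
      set a : P.S.obj X3 ⟶ X := P.π1.app X3 ≫ P.π0.app X2 ≫ P.π0.app X with ha
      set b : P.S.obj X3 ⟶ X := P.π0.app X3 ≫ P.π1.app X2 ≫ P.π0.app X with hb
      set c : P.S.obj X3 ⟶ X := P.π0.app X3 ≫ P.π0.app X2 ≫ P.π1.app X with hc
      -- rewrite the first component of τ's π1 image under S(τ)
      have e1 : P.S.map (τ X) ≫ P.π1.app X2 ≫ P.π0.app X = a := by
        rw [← Category.assoc, P.natπ1 (τ X), Category.assoc, hτ0 X, ha]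
      have sbc : P.Summable b c := by
        have h2 := P.summable_precomp (P.π0.app X3) (P.pairS hcom hzero hwit X)
        rwa [← Category.assoc, Category.assoc, ← hb, ← hc] at h2
      have e2 : P.S.map (τ X) ≫ P.π0.app X2 ≫ P.π1.app X = P.sum b c := by
        rw [← Category.assoc, P.natπ0 (τ X), Category.assoc, hτ1 X,
          P.sum_precomp _ (P.pairS hcom hzero hwit X), hb, hc]
      have sabc : P.Summable a (P.sum b c) := by
        have := P.summable_precomp (P.S.map (τ X)) (P.pairS hcom hzero hwit X)
        rwa [e1, e2] at this
      have lhs : P.S.map (τ X) ≫ τ X ≫ P.π1.app X = P.sum a (P.sum b c) := by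
        rw [hτ1 X, P.sum_precomp _ (P.pairS hcom hzero hwit X), e1, e2]
      have rhs : τ X2 ≫ τ X ≫ P.π1.app X = P.sum (P.sum a b) c := by
        have t1 : τ X2 ≫ P.π1.app X2 ≫ P.π0.app X = P.sum a b := by
          rw [← Category.assoc, hτ1 X2, P.sum_postcomp _ (P.pairS hcom hzero hwit X2)]
          simp only [Category.assoc]
          rfl
        have t2 : τ X2 ≫ P.π0.app X2 ≫ P.π1.app X = c := by
          rw [← Category.assoc, hτ0 X2, Category.assoc, hc]
        rw [hτ1 X, P.sum_precomp _ (P.pairS hcom hzero hwit X), t1, t2]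
      rw [lhs, rhs, ← P.sum_comm hcom sabc,
        P.exchange hcom hzero hwit sbc (P.summable_symm hcom sabc)]
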